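/- arXiv:1905.04891 — 6 statements merged into one kernel-verified Lean document; each statement's English description precedes it below -/
import Mathlib

section
/- Let n ≥ 1, 0 ≤ α < n, and let f ∈ L¹(ℝⁿ). Then there exists a constant C depending only on n and α such that for every x ∈ ℝⁿ, M_α f(x) ≤ C · (M f(x))^{1 − α/n} · ‖f‖_{L¹(ℝⁿ)}^{α/n}. -/
open MeasureTheory Metric ENNReal

/-- The fractional maximal function `M_α f (x) = sup_{ρ>0} ρ^α ⨍_{B_ρ(x)} f`,
for an `ℝ≥0∞`-valued function `f` on `ℝⁿ`. Here `M := M₀` is the Hardy–Littlewood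
maximal function. -/
noncomputable def fracMax {n : ℕ} (α : ℝ)
    (f : EuclideanSpace ℝ (Fin n) → ℝ≥0∞) (x : EuclideanSpace ℝ (Fin n)) : ℝ≥0∞ :=
  ⨆ (ρ : ℝ) (_ : 0 < ρ), ENNReal.ofReal (ρ ^ α) * ⨍⁻ y in ball x ρ, f y ∂volume

/-- for `f ∈ L¹(ℝⁿ)` and `0 ≤ α < n`,
`M_α f(x) ≤ C (M f(x))^{1-α/n} ‖f‖₁^{α/n}` with `C = C(n, α)`. -/
theorem stmt1 (n : ℕ) (hn : 1 ≤ n) (α : ℝ) (hα0 : 0 ≤ α) (hαn : α < n) :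
    ∃ C : ℝ, 0 < C ∧
      ∀ f : EuclideanSpace ℝ (Fin n) → ℝ, Integrable f volume →
        ∀ x : EuclideanSpace ℝ (Fin n),
          fracMax α (fun y => ENNReal.ofReal |f y|) x ≤
            ENNReal.ofReal C *
              (fracMax 0 (fun y => ENNReal.ofReal |f y|) x) ^ (1 - α / n) *
              (∫⁻ y, ENNReal.ofReal |f y| ∂volume) ^ (α / n) := by
  have hn' : (0 : ℝ) < n := by exact_mod_cast hn
  set θ : ℝ := α / n with hθdef
  have hθ0 : 0 ≤ θ := div_nonneg hα0 hn'.le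
  have hθ1 : θ < 1 := (div_lt_one hn').mpr hαn
  set vB := volume (ball (0 : EuclideanSpace ℝ (Fin n)) 1) with hvBdef
  have hvB0 : vB ≠ 0 := (measure_ball_pos _ _ one_pos).ne'
  have hvBt : vB ≠ ∞ := measure_ball_lt_top.ne
  have hCfin : vB⁻¹ ^ θ ≠ ∞ :=
    (ENNReal.rpow_lt_top_of_nonneg hθ0 (ENNReal.inv_ne_top.2 hvB0)).ne
  refine ⟨(vB⁻¹ ^ θ).toReal + 1, by positivity, ?_⟩
  have hCge : vB⁻¹ ^ θ ≤ ENNReal.ofReal ((vB⁻¹ ^ θ).toReal + 1) := by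
    conv_lhs => rw [← ENNReal.ofReal_toReal hCfin]
    exact ENNReal.ofReal_le_ofReal (by linarith)
  intro f hf x
  set g : EuclideanSpace ℝ (Fin n) → ℝ≥0∞ := fun y => ENNReal.ofReal |f y| with hg
  have hgint : ∫⁻ y, g y ∂volume ≠ ∞ := by
    have h := hf.2
    rw [HasFiniteIntegral] at h
    simpa [hg, ← Real.enorm_eq_ofReal_abs] using h.ne
  rw [fracMax]
  refine iSup₂_le fun ρ hρ => ?_
  set A := ⨍⁻ y in ball x ρ, g y ∂volume with hA
  rcases eq_or_ne A 0 with hA0 | hA0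
  · simp [hA0]
  -- ball volume
  haveI : Nontrivial (EuclideanSpace ℝ (Fin n)) :=
    Module.nontrivial_of_finrank_pos (R := ℝ)
      (by rw [finrank_euclideanSpace_fin]; omega)
  have hvol : volume (ball x ρ) = ENNReal.ofReal (ρ ^ (n : ℝ)) * vB := by
    rw [Measure.addHaar_ball volume x hρ.le, finrank_euclideanSpace_fin,
      ← Real.rpow_natCast ρ n]
  have hρn0 : ENNReal.ofReal (ρ ^ (n : ℝ)) ≠ 0 :=
    (ENNReal.ofReal_pos.2 (Real.rpow_pos_of_pos hρ _)).ne'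
  have hρnt : ENNReal.ofReal (ρ ^ (n : ℝ)) ≠ ∞ := ENNReal.ofReal_ne_top
  have hAtop : A ≠ ∞ := by
    rw [hA, setLAverage_eq]
    exact (ENNReal.div_lt_top (ne_top_of_le_ne_top hgint (setLIntegral_le_lintegral _ _))
      ((measure_ball_pos volume x hρ).ne')).ne
  -- A is bounded by the maximal function
  have hMle : A ≤ fracMax 0 g x := by
    have h := le_iSup₂ (f := fun (ρ : ℝ) (_ : 0 < ρ) =>
      ENNReal.ofReal (ρ ^ (0 : ℝ)) * ⨍⁻ y in ball x ρ, g y ∂volume) ρ hρ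
    simpa [fracMax, Real.rpow_zero] using h
  -- the key bound on ρⁿ times the average
  have hkey : ENNReal.ofReal (ρ ^ (n : ℝ)) * A ≤ vB⁻¹ * ∫⁻ y, g y ∂volume := by
    rw [hA, setLAverage_eq, hvol, ← mul_div_assoc,
      ENNReal.mul_div_mul_left _ _ hρn0 hρnt]
    rw [div_eq_mul_inv, mul_comm]
    exact mul_le_mul' le_rfl (setLIntegral_le_lintegral _ _)
  -- rewrite ρ^α as (ρ^n)^θ
  have hρα : ENNReal.ofReal (ρ ^ α) = ENNReal.ofReal (ρ ^ (n : ℝ)) ^ θ := by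
    rw [ENNReal.ofReal_rpow_of_pos (Real.rpow_pos_of_pos hρ _), ← Real.rpow_mul hρ.le]
    have hnθ : (n : ℝ) * θ = α := by rw [hθdef]; field_simp
    rw [hnθ]
  calc ENNReal.ofReal (ρ ^ α) * A
      = ENNReal.ofReal (ρ ^ (n : ℝ)) ^ θ * (A ^ (1 - θ) * A ^ θ) := by
        rw [hρα, ← ENNReal.rpow_add _ _ hA0 hAtop]
        norm_num
    _ = A ^ (1 - θ) * (ENNReal.ofReal (ρ ^ (n : ℝ)) * A) ^ θ := by
        rw [ENNReal.mul_rpow_of_nonneg _ _ hθ0]; ring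
    _ ≤ (fracMax 0 g x) ^ (1 - θ) * (vB⁻¹ * ∫⁻ y, g y ∂volume) ^ θ :=
        mul_le_mul' (ENNReal.rpow_le_rpow hMle (by linarith))
          (ENNReal.rpow_le_rpow hkey hθ0)
    _ = vB⁻¹ ^ θ * (fracMax 0 g x) ^ (1 - θ) * (∫⁻ y, g y ∂volume) ^ θ := by
        rw [ENNReal.mul_rpow_of_nonneg _ _ hθ0]; ring
    _ ≤ ENNReal.ofReal ((vB⁻¹ ^ θ).toReal + 1) * (fracMax 0 g x) ^ (1 - θ) *
          (∫⁻ y, g y ∂volume) ^ θ := by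
        gcongr
end

section
/- Let n ≥ 1, r > 0, 0 ≤ α ≤ n, x ∈ ℝⁿ and y, w ∈ B_r(x). Then for every locally integrable f : ℝⁿ → ℝ, Mʳ(Tʳ_α f)(y) ≤ 4^{n−α} · M_α f(w). -/
open MeasureTheory Metric ENNReal

/-- The cut-off fractional maximal function `Mʳ_α f (x) = sup_{0<ρ<r} ρ^α ⨍_{B_ρ(x)} f`;
`Mʳ := Mʳ₀`. -/
noncomputable def fracMaxLt {n : ℕ} (α r : ℝ)
    (f : EuclideanSpace ℝ (Fin n) → ℝ≥0∞) (x : EuclideanSpace ℝ (Fin n)) : ℝ≥0∞ :=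
  ⨆ (ρ : ℝ) (_ : 0 < ρ) (_ : ρ < r), ENNReal.ofReal (ρ ^ α) * ⨍⁻ y in ball x ρ, f y ∂volume

/-- The cut-off fractional maximal function `Tʳ_α f (x) = sup_{ρ≥r} ρ^α ⨍_{B_ρ(x)} f`. -/
noncomputable def fracMaxGe {n : ℕ} (α r : ℝ)
    (f : EuclideanSpace ℝ (Fin n) → ℝ≥0∞) (x : EuclideanSpace ℝ (Fin n)) : ℝ≥0∞ :=
  ⨆ (ρ : ℝ) (_ : r ≤ ρ), ENNReal.ofReal (ρ ^ α) * ⨍⁻ y in ball x ρ, f y ∂volume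

lemma real_key (N α s : ℝ) (hs : 0 < s) :
    s ^ α * (s ^ N)⁻¹ = (4 : ℝ) ^ (N - α) * ((4 * s) ^ α * ((4 * s) ^ N)⁻¹) := by
  have h4s : (0 : ℝ) < 4 * s := by positivity
  rw [← Real.rpow_neg hs.le, ← Real.rpow_add hs, ← Real.rpow_neg h4s.le,
    ← Real.rpow_add h4s, Real.mul_rpow (by norm_num) hs.le, ← mul_assoc,
    ← Real.rpow_add (by norm_num : (0 : ℝ) < 4)]
  have h : N - α + (α + -N) = 0 := by ring
  rw [h, Real.rpow_zero, one_mul]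

/-- for `y, w ∈ B_r(x)`, `Mʳ(Tʳ_α f)(y) ≤ 4^{n-α} M_α f(w)`. -/
theorem stmt5 (n : ℕ) (hn : 1 ≤ n) (r : ℝ) (hr : 0 < r)
    (α : ℝ) (hα0 : 0 ≤ α) (hαn : α ≤ n)
    (x y w : EuclideanSpace ℝ (Fin n)) (hy : y ∈ ball x r) (hw : w ∈ ball x r)
    (f : EuclideanSpace ℝ (Fin n) → ℝ) (hf : LocallyIntegrable f volume) :
    fracMaxLt 0 r (fracMaxGe α r (fun t => ENNReal.ofReal |f t|)) y ≤
      ENNReal.ofReal ((4 : ℝ) ^ ((n : ℝ) - α)) *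
        fracMax α (fun t => ENNReal.ofReal |f t|) w := by
  haveI : Nonempty (Fin n) := ⟨⟨0, hn⟩⟩
  haveI : Nontrivial (EuclideanSpace ℝ (Fin n)) := inferInstance
  set F : EuclideanSpace ℝ (Fin n) → ℝ≥0∞ := fun t => ENNReal.ofReal |f t| with hF
  set C : ℝ≥0∞ := ENNReal.ofReal ((4 : ℝ) ^ ((n : ℝ) - α)) * fracMax α F w with hC
  set c : ℝ≥0∞ := volume (ball (0 : EuclideanSpace ℝ (Fin n)) 1) with hc
  -- pointwise bound: for z within 3r of w, T^r_α F z ≤ C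
  have hpt : ∀ z : EuclideanSpace ℝ (Fin n), dist z w < 3 * r → fracMaxGe α r F z ≤ C := by
    intro z hz
    refine iSup_le fun s => iSup_le fun hs => ?_
    have hs0 : 0 < s := lt_of_lt_of_le hr hs
    have h4s : (0 : ℝ) < 4 * s := by positivity
    have hsub : ball z s ⊆ ball w (4 * s) := by
      intro u hu
      rw [mem_ball] at hu ⊢
      calc dist u w ≤ dist u z + dist z w := dist_triangle u z w
        _ < s + 3 * r := by linarith
        _ ≤ 4 * s := by linarith
    have hI : ∫⁻ u in ball z s, F u ∂volume ≤ ∫⁻ u in ball w (4 * s), F u ∂volume :=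
      lintegral_mono_set hsub
    have hV1 : volume (ball z s) = ENNReal.ofReal (s ^ n) * c := by
      rw [Measure.addHaar_ball volume z hs0.le, finrank_euclideanSpace_fin]
    have hV4 : volume (ball w (4 * s)) = ENNReal.ofReal ((4 * s) ^ n) * c := by
      rw [Measure.addHaar_ball volume w h4s.le, finrank_euclideanSpace_fin]
    have hc0 : c ≠ 0 := (measure_ball_pos volume 0 one_pos).ne'
    have hctop : c ≠ ⊤ := measure_ball_lt_top.ne
    have hsn : (0 : ℝ) < s ^ n := by positivity
    have h4sn : (0 : ℝ) < (4 * s) ^ n := by positivity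
    have key : ENNReal.ofReal (s ^ α) * (volume (ball z s))⁻¹ =
        ENNReal.ofReal ((4 : ℝ) ^ ((n : ℝ) - α)) *
          (ENNReal.ofReal ((4 * s) ^ α) * (volume (ball w (4 * s)))⁻¹) := by
      rw [hV1, hV4,
        ENNReal.mul_inv (Or.inl (ENNReal.ofReal_pos.mpr hsn).ne') (Or.inl ENNReal.ofReal_ne_top),
        ENNReal.mul_inv (Or.inl (ENNReal.ofReal_pos.mpr h4sn).ne') (Or.inl ENNReal.ofReal_ne_top),
        ← ENNReal.ofReal_inv_of_pos hsn, ← ENNReal.ofReal_inv_of_pos h4sn]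
      have e : ENNReal.ofReal (s ^ α) * ENNReal.ofReal ((s ^ n : ℝ))⁻¹ =
          ENNReal.ofReal ((4 : ℝ) ^ ((n : ℝ) - α)) *
            (ENNReal.ofReal ((4 * s) ^ α) * ENNReal.ofReal (((4 * s) ^ n : ℝ))⁻¹) := by
        rw [← ENNReal.ofReal_mul (Real.rpow_nonneg hs0.le α),
          ← ENNReal.ofReal_mul (Real.rpow_nonneg h4s.le α),
          ← ENNReal.ofReal_mul (Real.rpow_nonneg (by norm_num) _)]
        congr 1
        have hs' : s ^ (n : ℕ) = s ^ ((n : ℕ) : ℝ) := (Real.rpow_natCast s n).symm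
        have h4' : (4 * s) ^ (n : ℕ) = (4 * s) ^ ((n : ℕ) : ℝ) :=
          (Real.rpow_natCast (4 * s) n).symm
        rw [hs', h4']
        exact real_key (n : ℝ) α s hs0
      calc ENNReal.ofReal (s ^ α) * (ENNReal.ofReal ((s ^ n : ℝ))⁻¹ * c⁻¹)
          = (ENNReal.ofReal (s ^ α) * ENNReal.ofReal ((s ^ n : ℝ))⁻¹) * c⁻¹ := by ring
        _ = (ENNReal.ofReal ((4 : ℝ) ^ ((n : ℝ) - α)) *
              (ENNReal.ofReal ((4 * s) ^ α) * ENNReal.ofReal (((4 * s) ^ n : ℝ))⁻¹)) * c⁻¹ := by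
            rw [e]
        _ = _ := by ring
    have hM : ENNReal.ofReal ((4 * s) ^ α) * ⨍⁻ u in ball w (4 * s), F u ∂volume ≤
        fracMax α F w :=
      le_iSup_of_le (4 * s) (le_iSup_of_le h4s le_rfl)
    calc ENNReal.ofReal (s ^ α) * ⨍⁻ u in ball z s, F u ∂volume
        = (ENNReal.ofReal (s ^ α) * (volume (ball z s))⁻¹) *
            ∫⁻ u in ball z s, F u ∂volume := by
          rw [setLAverage_eq, div_eq_mul_inv]; ring
      _ = (ENNReal.ofReal ((4 : ℝ) ^ ((n : ℝ) - α)) *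
            (ENNReal.ofReal ((4 * s) ^ α) * (volume (ball w (4 * s)))⁻¹)) *
            ∫⁻ u in ball z s, F u ∂volume := by rw [key]
      _ ≤ (ENNReal.ofReal ((4 : ℝ) ^ ((n : ℝ) - α)) *
            (ENNReal.ofReal ((4 * s) ^ α) * (volume (ball w (4 * s)))⁻¹)) *
            ∫⁻ u in ball w (4 * s), F u ∂volume := mul_le_mul_right hI _
      _ = ENNReal.ofReal ((4 : ℝ) ^ ((n : ℝ) - α)) *
            (ENNReal.ofReal ((4 * s) ^ α) * ⨍⁻ u in ball w (4 * s), F u ∂volume) := by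
          rw [setLAverage_eq, div_eq_mul_inv]; ring
      _ ≤ C := by rw [hC]; exact mul_le_mul_right hM _
  -- main argument
  refine iSup_le fun ρ => iSup_le fun hρ => iSup_le fun hρr => ?_
  rw [Real.rpow_zero, ENNReal.ofReal_one, one_mul]
  have hball : ∀ z ∈ ball y ρ, fracMaxGe α r F z ≤ C := by
    intro z hz
    apply hpt
    have h1 : dist z y < ρ := mem_ball.mp hz
    have h2 : dist y x < r := mem_ball.mp hy
    have h3 : dist x w < r := by rw [dist_comm]; exact mem_ball.mp hw
    calc dist z w ≤ dist z y + dist y x + dist x w := dist_triangle4 z y x w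
      _ < 3 * r := by linarith
  rw [setLAverage_eq]
  have hint : ∫⁻ z in ball y ρ, fracMaxGe α r F z ∂volume ≤ C * volume (ball y ρ) := by
    calc ∫⁻ z in ball y ρ, fracMaxGe α r F z ∂volume
        ≤ ∫⁻ _ in ball y ρ, C ∂volume := setLIntegral_mono' measurableSet_ball hball
      _ = C * volume (ball y ρ) := by rw [setLIntegral_const]
  exact ENNReal.div_le_of_le_mul hint
end

section
/- Let n ≥ 1, 0 < α < n, ρ > 0 and x ∈ ℝⁿ. Then there exists a constant C depending only on n and α such that for every locally integrable f : ℝⁿ → ℝ, ∫_{B_ρ(x)} M_α(χ_{B_{2ρ}(x)} f)(y) dy ≤ C · ρ^α · ∫_{B_{2ρ}(x)} |f(z)| dz. -/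
open MeasureTheory Metric ENNReal Set

section Aux

variable {n : ℕ}

/-- Pointwise bound of the fractional maximal function by the Riesz potential. -/
lemma fracMax_le_riesz (hn : 1 ≤ n) {α : ℝ} (hα0 : 0 < α) (hαn : α < n)
    (g : EuclideanSpace ℝ (Fin n) → ℝ≥0∞) (y : EuclideanSpace ℝ (Fin n)) :
    fracMax α g y ≤ (volume (ball (0 : EuclideanSpace ℝ (Fin n)) 1))⁻¹ *
      ∫⁻ z, g z * ENNReal.ofReal (dist y z ^ (α - n)) ∂volume := by
  haveI : Nonempty (Fin n) := ⟨⟨0, hn⟩⟩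
  set c1 := volume (ball (0 : EuclideanSpace ℝ (Fin n)) 1) with hc1
  refine iSup_le fun r => iSup_le fun hr => ?_
  rw [setLAverage_eq]
  have hv : volume (ball y r) = ENNReal.ofReal (r ^ (n : ℝ)) * c1 := by
    rw [Measure.addHaar_ball _ _ hr.le, finrank_euclideanSpace_fin, Real.rpow_natCast]
  have hsing : volume ({y} : Set (EuclideanSpace ℝ (Fin n))) = 0 := measure_singleton y
  have hy0 : ∀ᵐ z ∂(volume : Measure (EuclideanSpace ℝ (Fin n))), z ≠ y := by
    rw [ae_iff]
    simpa using hsing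
  have key : ENNReal.ofReal (r ^ (α - n)) * ∫⁻ z in ball y r, g z ∂volume ≤
      ∫⁻ z, g z * ENNReal.ofReal (dist y z ^ (α - n)) ∂volume := by
    calc ENNReal.ofReal (r ^ (α - n)) * ∫⁻ z in ball y r, g z ∂volume
        = ∫⁻ z in ball y r, ENNReal.ofReal (r ^ (α - n)) * g z ∂volume :=
          (lintegral_const_mul' _ _ ofReal_ne_top).symm
      _ ≤ ∫⁻ z in ball y r, g z * ENNReal.ofReal (dist y z ^ (α - n)) ∂volume := by
          refine lintegral_mono_ae ?_
          filter_upwards [ae_restrict_mem measurableSet_ball, ae_restrict_of_ae hy0]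
            with z hz hzy
          rw [mul_comm]
          refine mul_le_mul_right (ofReal_le_ofReal ?_) _
          refine Real.rpow_le_rpow_of_nonpos ?_ ?_ (by push_cast; linarith)
          · rw [dist_comm]; exact dist_pos.mpr hzy
          · rw [dist_comm]; exact (mem_ball.mp hz).le
      _ ≤ _ := setLIntegral_le_lintegral _ _
  have hrn0 : ENNReal.ofReal (r ^ (n : ℝ)) ≠ 0 :=
    (ENNReal.ofReal_pos.mpr (Real.rpow_pos_of_pos hr _)).ne'
  have hrnt : ENNReal.ofReal (r ^ (n : ℝ)) ≠ ∞ := ofReal_ne_top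
  have halg : ENNReal.ofReal (r ^ α) * ((∫⁻ z in ball y r, g z ∂volume) / volume (ball y r))
      = c1⁻¹ * (ENNReal.ofReal (r ^ (α - n)) * ∫⁻ z in ball y r, g z ∂volume) := by
    rw [hv, ENNReal.div_eq_inv_mul, ENNReal.mul_inv (Or.inl hrn0) (Or.inl hrnt)]
    have : ENNReal.ofReal (r ^ α) * (ENNReal.ofReal (r ^ (n : ℝ)))⁻¹
        = ENNReal.ofReal (r ^ (α - n)) := by
      rw [← ENNReal.ofReal_inv_of_pos (Real.rpow_pos_of_pos hr _),
        ← ENNReal.ofReal_mul (Real.rpow_pos_of_pos hr _).le,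
        ← Real.rpow_neg hr.le, ← Real.rpow_add hr]
      norm_num [sub_eq_add_neg]
    calc ENNReal.ofReal (r ^ α) * ((ENNReal.ofReal (r ^ (n:ℝ)))⁻¹ * c1⁻¹ *
          ∫⁻ z in ball y r, g z ∂volume)
        = c1⁻¹ * ((ENNReal.ofReal (r ^ α) * (ENNReal.ofReal (r ^ (n:ℝ)))⁻¹) *
          ∫⁻ z in ball y r, g z ∂volume) := by ring
      _ = _ := by rw [this]
  rw [halg]
  exact mul_le_mul_right key _

/-- Dyadic annuli bound for the Riesz kernel integral over a ball. -/
lemma riesz_kernel_integral_le (hn : 1 ≤ n) {α : ℝ} (hα0 : 0 < α) (hαn : α < n)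
    (z : EuclideanSpace ℝ (Fin n)) {R : ℝ} (hR : 0 < R) :
    ∫⁻ y in ball z R, ENNReal.ofReal (dist y z ^ (α - n)) ∂volume ≤
      ENNReal.ofReal (R ^ α * (1/2 : ℝ) ^ (α - n) * (1 - (1/2 : ℝ) ^ α)⁻¹) *
        volume (ball (0 : EuclideanSpace ℝ (Fin n)) 1) := by
  haveI : Nonempty (Fin n) := ⟨⟨0, hn⟩⟩
  set c1 := volume (ball (0 : EuclideanSpace ℝ (Fin n)) 1) with hc1
  set β := α - (n : ℝ) with hβ
  have hβ0 : β < 0 := by rw [hβ]; linarith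
  set A : ℕ → Set (EuclideanSpace ℝ (Fin n)) := fun k => ball z (R * (1/2) ^ k) \ ball z (R * (1/2) ^ (k + 1)) with hA
  -- the punctured ball is covered by the annuli
  have hcov : ball z R \ {z} ⊆ ⋃ k, A k := by
    intro y hy
    have hd0 : 0 < dist y z := dist_pos.mpr (by simpa using hy.2)
    have hdR : dist y z < R := mem_ball.mp hy.1
    have hex : ∃ k : ℕ, R * (1/2 : ℝ) ^ (k + 1) ≤ dist y z := by
      obtain ⟨k, hk⟩ := exists_pow_lt_of_lt_one (div_pos hd0 hR) (by norm_num : (1/2 : ℝ) < 1)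
      refine ⟨k, ?_⟩
      have h1 : ((1:ℝ)/2) ^ (k + 1) ≤ (1/2 : ℝ) ^ k :=
        pow_le_pow_of_le_one (by norm_num) (by norm_num) (Nat.le_succ k)
      have := (lt_div_iff₀ hR).mp hk
      nlinarith
    set k := Nat.find hex with hk
    have hk1 : R * (1/2 : ℝ) ^ (k + 1) ≤ dist y z := Nat.find_spec hex
    have hk2 : dist y z < R * (1/2 : ℝ) ^ k := by
      rcases Nat.eq_zero_or_pos k with h0 | hpos
      · rw [h0]; simpa using hdR
      · have := Nat.find_min hex (Nat.sub_lt hpos one_pos)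
        push_neg at this
        have hkk : k - 1 + 1 = k := Nat.succ_pred_eq_of_pos hpos
        rw [hkk] at this
        exact this
    exact mem_iUnion.mpr ⟨k, mem_ball.mpr hk2, fun h => absurd (mem_ball.mp h) (not_lt.mpr hk1)⟩
  have hpt : ∫⁻ y in ball z R, ENNReal.ofReal (dist y z ^ β) ∂volume
      = ∫⁻ y in ball z R \ {z}, ENNReal.ofReal (dist y z ^ β) ∂volume := by
    refine (setLIntegral_congr ?_).symm
    exact diff_ae_eq_self.mpr (measure_mono_null inter_subset_right (measure_singleton z))
  rw [hpt]
  calc ∫⁻ y in ball z R \ {z}, ENNReal.ofReal (dist y z ^ β) ∂volume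
      ≤ ∫⁻ y in ⋃ k, A k, ENNReal.ofReal (dist y z ^ β) ∂volume :=
        lintegral_mono_set hcov
    _ ≤ ∑' k, ∫⁻ y in A k, ENNReal.ofReal (dist y z ^ β) ∂volume :=
        lintegral_iUnion_le _ _
    _ ≤ ∑' k, ENNReal.ofReal ((R * (1/2) ^ (k + 1)) ^ β) * volume (A k) := by
        refine ENNReal.tsum_le_tsum fun k => ?_
        have hAk : MeasurableSet (A k) := measurableSet_ball.diff measurableSet_ball
        calc ∫⁻ y in A k, ENNReal.ofReal (dist y z ^ β) ∂volume
            ≤ ∫⁻ _ in A k, ENNReal.ofReal ((R * (1/2) ^ (k + 1)) ^ β) ∂volume := by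
              refine setLIntegral_mono' hAk fun y hy => ofReal_le_ofReal ?_
              refine Real.rpow_le_rpow_of_nonpos
                (by positivity) ?_ hβ0.le
              have := hy.2
              rw [mem_ball, not_lt] at this
              exact this
          _ = ENNReal.ofReal ((R * (1/2) ^ (k + 1)) ^ β) * volume (A k) := by
              rw [setLIntegral_const]
    _ ≤ ∑' k, ENNReal.ofReal ((R * (1/2) ^ (k + 1)) ^ β) *
          (ENNReal.ofReal ((R * (1/2) ^ k) ^ (n : ℝ)) * c1) := by
        refine ENNReal.tsum_le_tsum fun k => ?_
        refine mul_le_mul_right ?_ _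
        have hvol : volume (A k) ≤ volume (ball z (R * (1/2) ^ k)) :=
          measure_mono diff_subset
        rw [Measure.addHaar_ball _ _ (by positivity : (0:ℝ) ≤ R * (1/2) ^ k),
          finrank_euclideanSpace_fin, ← Real.rpow_natCast (R * (1/2) ^ k) n] at hvol
        exact hvol
    _ = ∑' k, (ENNReal.ofReal (R ^ α * (1/2 : ℝ) ^ β) * c1) * ENNReal.ofReal ((1/2 : ℝ) ^ α) ^ k := by
        refine tsum_congr fun k => ?_
        have hhalf : (0:ℝ) < 1/2 := by norm_num
        have hq : (0:ℝ) < (1/2 : ℝ) ^ k := by positivity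
        have hreal : (R * (1/2) ^ (k + 1)) ^ β * (R * (1/2) ^ k) ^ (n : ℝ)
            = R ^ α * (1/2 : ℝ) ^ β * ((1/2 : ℝ) ^ α) ^ k := by
          rw [Real.mul_rpow hR.le (by positivity), Real.mul_rpow hR.le hq.le,
            ← Real.rpow_natCast ((1/2:ℝ)) (k+1), ← Real.rpow_natCast ((1/2:ℝ)) k,
            ← Real.rpow_natCast ((1/2:ℝ) ^ α) k,
            ← Real.rpow_mul hhalf.le, ← Real.rpow_mul hhalf.le, ← Real.rpow_mul hhalf.le]
          have hL : R ^ β * (1/2:ℝ) ^ (((k+1 : ℕ) : ℝ) * β) *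
              (R ^ ((n:ℕ) : ℝ) * (1/2:ℝ) ^ (((k : ℕ) : ℝ) * ((n:ℕ) : ℝ)))
              = R ^ (β + ((n:ℕ) : ℝ)) * (1/2:ℝ) ^ (((k+1 : ℕ) : ℝ) * β + ((k : ℕ) : ℝ) * ((n:ℕ) : ℝ)) := by
            rw [Real.rpow_add hR, Real.rpow_add hhalf]; ring
          have hR2 : R ^ α * (1/2:ℝ) ^ β * (1/2:ℝ) ^ (α * ((k : ℕ) : ℝ))
              = R ^ α * (1/2:ℝ) ^ (β + α * ((k : ℕ) : ℝ)) := by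
            rw [Real.rpow_add hhalf]; ring
          rw [hL, hR2]
          have e1 : β + ((n:ℕ) : ℝ) = α := by rw [hβ]; ring
          have e2 : ((k+1 : ℕ) : ℝ) * β + ((k : ℕ) : ℝ) * ((n:ℕ) : ℝ) = β + α * ((k : ℕ) : ℝ) := by
            rw [hβ]; push_cast; ring
          rw [e1, e2]
        rw [← mul_assoc, ← ENNReal.ofReal_mul (by positivity), hreal,
          ENNReal.ofReal_mul (by positivity), ENNReal.ofReal_pow (by positivity)]
        ring
    _ = (ENNReal.ofReal (R ^ α * (1/2 : ℝ) ^ β) * c1) * (1 - ENNReal.ofReal ((1/2 : ℝ) ^ α))⁻¹ := by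
        rw [ENNReal.tsum_mul_left, ENNReal.tsum_geometric]
    _ = ENNReal.ofReal (R ^ α * (1/2 : ℝ) ^ β * (1 - (1/2 : ℝ) ^ α)⁻¹) * c1 := by
        have hlt1 : ((1:ℝ)/2) ^ α < 1 :=
          Real.rpow_lt_one (by norm_num) (by norm_num) hα0
        rw [← ENNReal.ofReal_one, ← ENNReal.ofReal_sub _ (by positivity),
          ← ENNReal.ofReal_inv_of_pos (by linarith)]
        rw [mul_right_comm, ← ENNReal.ofReal_mul (by positivity)]
end Aux

/-- there exists `C = C(n, α)` such that
`∫_{B_ρ(x)} M_α(χ_{B_{2ρ}(x)} f) ≤ C ρ^α ∫_{B_{2ρ}(x)} |f|`. -/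
theorem stmt8 (n : ℕ) (hn : 1 ≤ n) (α : ℝ) (hα0 : 0 < α) (hαn : α < n) :
    ∃ C : ℝ, 0 < C ∧
      ∀ (x : EuclideanSpace ℝ (Fin n)) (ρ : ℝ), 0 < ρ →
        ∀ f : EuclideanSpace ℝ (Fin n) → ℝ, LocallyIntegrable f volume →
          ∫⁻ y in ball x ρ,
              fracMax α ((ball x (2 * ρ)).indicator fun z => ENNReal.ofReal |f z|) y
                ∂volume ≤
            ENNReal.ofReal (C * ρ ^ α) *
              ∫⁻ z in ball x (2 * ρ), ENNReal.ofReal |f z| ∂volume := by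
  classical
  haveI : Nonempty (Fin n) := ⟨⟨0, hn⟩⟩
  set c1 := volume (ball (0 : EuclideanSpace ℝ (Fin n)) 1) with hc1
  have hc10 : c1 ≠ 0 := (measure_ball_pos volume _ one_pos).ne'
  have hc1t : c1 ≠ ∞ := measure_ball_lt_top.ne
  have hlt1 : ((1:ℝ)/2) ^ α < 1 := Real.rpow_lt_one (by norm_num) (by norm_num) hα0
  refine ⟨3 ^ α * (1/2 : ℝ) ^ (α - n) * (1 - (1/2 : ℝ) ^ α)⁻¹, ?_, ?_⟩
  · have h3 : (0:ℝ) < 3 ^ α := Real.rpow_pos_of_pos (by norm_num) _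
    have hh : (0:ℝ) < (1/2:ℝ) ^ (α - n) := Real.rpow_pos_of_pos (by norm_num) _
    exact mul_pos (mul_pos h3 hh) (inv_pos.mpr (by linarith))
  intro x ρ hρ f hf
  have hm := hf.aestronglyMeasurable
  set f' := hm.mk f with hf'
  have hmeas : Measurable f' := hm.stronglyMeasurable_mk.measurable
  have hae : (fun z => ENNReal.ofReal |f z|) =ᵐ[volume]
      (fun z => ENNReal.ofReal |f' z|) :=
    hm.ae_eq_mk.mono fun z hz => by dsimp only; rw [hf', hz]
  set h : EuclideanSpace ℝ (Fin n) → ℝ≥0∞ := fun z => ENNReal.ofReal |f' z| with hh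
  have hhm : Measurable h := hmeas.abs.ennreal_ofReal
  set g := (ball x (2*ρ)).indicator h with hg
  have hindae : ((ball x (2*ρ)).indicator fun z => ENNReal.ofReal |f z|) =ᵐ[volume] g := by
    refine hae.mono fun z hz => ?_
    simp only [hg, Set.indicator_apply]
    split_ifs <;> simp [hz, hh]
  have hLHS : ∫⁻ y in ball x ρ,
      fracMax α ((ball x (2 * ρ)).indicator fun z => ENNReal.ofReal |f z|) y ∂volume
      = ∫⁻ y in ball x ρ, fracMax α g y ∂volume := by
    refine lintegral_congr fun y => ?_
    unfold fracMax
    refine iSup_congr fun r => iSup_congr fun hr => ?_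
    congr 1
    exact laverage_congr (ae_restrict_of_ae hindae)
  have hRHS : ∫⁻ z in ball x (2*ρ), ENNReal.ofReal |f z| ∂volume
      = ∫⁻ z in ball x (2*ρ), h z ∂volume :=
    lintegral_congr_ae (ae_restrict_of_ae hae)
  rw [hLHS, hRHS]
  set β := α - (n : ℝ) with hβ
  set K := ENNReal.ofReal ((3*ρ) ^ α * (1/2:ℝ) ^ β * (1 - (1/2:ℝ) ^ α)⁻¹) * c1 with hK
  have hKt : K ≠ ∞ := ENNReal.mul_ne_top ofReal_ne_top hc1t
  calc ∫⁻ y in ball x ρ, fracMax α g y ∂volume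
      ≤ ∫⁻ y in ball x ρ, c1⁻¹ * ∫⁻ z, g z * ENNReal.ofReal (dist y z ^ β) ∂volume ∂volume :=
        lintegral_mono fun y => fracMax_le_riesz hn hα0 hαn g y
    _ = c1⁻¹ * ∫⁻ y in ball x ρ, ∫⁻ z, g z * ENNReal.ofReal (dist y z ^ β) ∂volume ∂volume :=
        lintegral_const_mul' _ _ (ENNReal.inv_ne_top.mpr hc10)
    _ = c1⁻¹ * ∫⁻ y in ball x ρ, ∫⁻ z in ball x (2*ρ),
          h z * ENNReal.ofReal (dist y z ^ β) ∂volume ∂volume := by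
        congr 1
        refine lintegral_congr fun y => ?_
        rw [← lintegral_indicator measurableSet_ball]
        refine lintegral_congr fun z => ?_
        simp only [hg, Set.indicator_apply]
        split_ifs <;> simp
    _ = c1⁻¹ * ∫⁻ z in ball x (2*ρ), ∫⁻ y in ball x ρ,
          h z * ENNReal.ofReal (dist y z ^ β) ∂volume ∂volume := by
        congr 1
        refine lintegral_lintegral_swap ?_
        refine (Measurable.mul (f := fun p : EuclideanSpace ℝ (Fin n) × EuclideanSpace ℝ (Fin n) => h p.2)
          (g := fun p => ENNReal.ofReal (dist p.1 p.2 ^ β)) ?_ ?_).aemeasurable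
        · exact hhm.comp measurable_snd
        · exact (measurable_dist.pow measurable_const).ennreal_ofReal
    _ = c1⁻¹ * ∫⁻ z in ball x (2*ρ),
          h z * ∫⁻ y in ball x ρ, ENNReal.ofReal (dist y z ^ β) ∂volume ∂volume := by
        congr 1
        exact lintegral_congr fun z => lintegral_const_mul' _ _ ofReal_ne_top
    _ ≤ c1⁻¹ * ∫⁻ z in ball x (2*ρ), h z * K ∂volume := by
        refine mul_le_mul_right ?_ _
        refine setLIntegral_mono' measurableSet_ball fun z hz => ?_
        refine mul_le_mul_right ?_ _
        calc ∫⁻ y in ball x ρ, ENNReal.ofReal (dist y z ^ β) ∂volume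
            ≤ ∫⁻ y in ball z (3*ρ), ENNReal.ofReal (dist y z ^ β) ∂volume := by
              refine lintegral_mono_set fun y hy => ?_
              have h1 : dist y x < ρ := mem_ball.mp hy
              have h2 : dist z x < 2*ρ := mem_ball.mp hz
              have h3 : dist y z ≤ dist y x + dist x z := dist_triangle _ _ _
              rw [dist_comm x z] at h3
              exact mem_ball.mpr (by linarith)
          _ ≤ K := by rw [hK]; exact riesz_kernel_integral_le hn hα0 hαn z (by linarith)
    _ = c1⁻¹ * (K * ∫⁻ z in ball x (2*ρ), h z ∂volume) := by
        congr 1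
        rw [lintegral_mul_const' K _ hKt, mul_comm]
    _ = ENNReal.ofReal ((3*ρ) ^ α * (1/2:ℝ) ^ β * (1 - (1/2:ℝ) ^ α)⁻¹) *
          ∫⁻ z in ball x (2*ρ), h z ∂volume := by
        rw [hK]
        calc c1⁻¹ * (ENNReal.ofReal ((3*ρ) ^ α * (1/2:ℝ) ^ β * (1 - (1/2:ℝ) ^ α)⁻¹) * c1 *
              ∫⁻ z in ball x (2*ρ), h z ∂volume)
            = (c1⁻¹ * c1) * (ENNReal.ofReal ((3*ρ) ^ α * (1/2:ℝ) ^ β * (1 - (1/2:ℝ) ^ α)⁻¹) *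
              ∫⁻ z in ball x (2*ρ), h z ∂volume) := by ring
          _ = _ := by rw [ENNReal.inv_mul_cancel hc10 hc1t, one_mul]
    _ ≤ ENNReal.ofReal ((3 ^ α * (1/2 : ℝ) ^ (α - n) * (1 - (1/2 : ℝ) ^ α)⁻¹) * ρ ^ α) *
          ∫⁻ z in ball x (2*ρ), h z ∂volume := by
        refine mul_le_mul_left (ofReal_le_ofReal (le_of_eq ?_)) _
        rw [Real.mul_rpow (by norm_num) hρ.le, hβ]
        ring
end

section
/- Let n ≥ 1, 0 < α < n, and let Ω ⊂ ℝⁿ be a bounded measurable set of diameter T₀ > 0. Then there exists a constant C depending only on n and α such that for every integrable f : ℝⁿ → [0, ∞) vanishing outside Ω, ∫_Ω M_α f(y) dy ≤ C · T₀^α · ∫_Ω f(y) dy. -/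
open MeasureTheory Metric ENNReal

lemma erpow_anti {a b : ℝ≥0∞} (h : a ≤ b) {c : ℝ} (hc : c ≤ 0) : b ^ c ≤ a ^ c := by
  rw [← neg_neg c, ENNReal.rpow_neg b, ENNReal.rpow_neg a]
  exact ENNReal.inv_le_inv.mpr (ENNReal.rpow_le_rpow h (neg_nonneg.mpr hc))

lemma akey (n : ℕ) (α R : ℝ) (hR : 0 < R) (k : ℕ) :
    (R * 2⁻¹ ^ (k+1)) ^ (α - n) * (R * 2⁻¹ ^ k) ^ (n : ℕ) =
      R ^ α * 2 ^ ((n:ℝ) - α) * ((2:ℝ) ^ (-α)) ^ k := by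
  have h2 : (0:ℝ) ≤ 2 := by norm_num
  have e1 : ∀ j : ℕ, (2⁻¹:ℝ) ^ j = (2:ℝ) ^ (-(j:ℝ)) := fun j => by
    rw [Real.rpow_neg h2, Real.rpow_natCast, inv_pow]
  have e2 : ∀ (j : ℕ) (c : ℝ), (R * (2:ℝ) ^ (-(j:ℝ))) ^ c = R ^ c * 2 ^ (-(j:ℝ) * c) := by
    intro j c
    rw [Real.mul_rpow hR.le (Real.rpow_nonneg h2 _), ← Real.rpow_mul h2]
  have e3 : ((R * 2⁻¹ ^ k) ^ (n : ℕ) : ℝ) = (R * 2⁻¹ ^ k) ^ ((n : ℕ) : ℝ) :=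
    (Real.rpow_natCast _ _).symm
  rw [e3, e1, e1, e2, e2]
  have e4 : ((2:ℝ) ^ (-α)) ^ k = (2:ℝ) ^ (-α * (k:ℝ)) := by
    rw [← Real.rpow_natCast ((2:ℝ) ^ (-α)) k, ← Real.rpow_mul h2]
  rw [e4]
  calc R ^ (α - (n:ℝ)) * 2 ^ (-((k+1:ℕ):ℝ) * (α - n)) * (R ^ ((n:ℕ):ℝ) * 2 ^ (-(k:ℝ) * (n:ℝ)))
      = (R ^ (α - (n:ℝ)) * R ^ ((n:ℕ):ℝ)) * (2 ^ (-((k+1:ℕ):ℝ) * (α - n)) * 2 ^ (-(k:ℝ) * (n:ℝ))) := by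
        ring
    _ = R ^ (α - (n:ℝ) + (n:ℝ)) * 2 ^ (-((k+1:ℕ):ℝ) * (α - n) + -(k:ℝ) * (n:ℝ)) := by
        rw [← Real.rpow_add hR, ← Real.rpow_add (by norm_num : (0:ℝ) < 2)]
    _ = R ^ α * 2 ^ (((n:ℝ) - α) + -α * (k:ℝ)) := by
        congr 1
        · congr 1; ring
        · congr 1; push_cast; ring
    _ = R ^ α * 2 ^ ((n:ℝ) - α) * 2 ^ (-α * (k:ℝ)) := by
        rw [Real.rpow_add (by norm_num : (0:ℝ) < 2)]; ring

lemma annuli (n : ℕ) (hn : 1 ≤ n) (α : ℝ) (hα0 : 0 < α) (hαn : α < n) (y : EuclideanSpace ℝ (Fin n))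
    (R : ℝ) (hR : 0 < R) :
    ∫⁻ x in ball y R, edist x y ^ (α - n) ∂volume ≤
      ENNReal.ofReal (R ^ α * 2 ^ ((n:ℝ) - α) * (1 - 2 ^ (-α))⁻¹) *
        volume (ball (0 : EuclideanSpace ℝ (Fin n)) 1) := by
  haveI : Nontrivial (EuclideanSpace ℝ (Fin n)) :=
    Module.nontrivial_of_finrank_pos (R := ℝ)
      (by rw [finrank_euclideanSpace_fin]; omega)
  set v : ℝ≥0∞ := volume (ball (0 : EuclideanSpace ℝ (Fin n)) 1) with hv
  have hhalf : (0:ℝ) < 2⁻¹ := by norm_num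
  have hrk : ∀ k : ℕ, (0:ℝ) < R * 2⁻¹ ^ k := fun k => by positivity
  set A : ℕ → Set (EuclideanSpace ℝ (Fin n)) := fun k => ball y (R * 2⁻¹ ^ k) \ ball y (R * 2⁻¹ ^ (k+1)) with hA
  have hcover : ball y R ⊆ {y} ∪ ⋃ k, A k := by
    intro x hx
    by_cases hxy : x = y
    · exact Or.inl hxy
    · right
      have hd0 : 0 < dist x y := dist_pos.2 hxy
      have hdR : dist x y < R := mem_ball.1 hx
      have hq : ∃ m : ℕ, R * 2⁻¹ ^ (m+1) ≤ dist x y := by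
        obtain ⟨m, hm⟩ := exists_pow_lt_of_lt_one (div_pos hd0 hR) (by norm_num : (2⁻¹:ℝ) < 1)
        refine ⟨m, ?_⟩
        have h1 : (2⁻¹:ℝ) ^ (m+1) ≤ 2⁻¹ ^ m :=
          pow_le_pow_of_le_one hhalf.le (by norm_num) (Nat.le_succ m)
        have h2 : R * 2⁻¹ ^ m < dist x y := by
          rw [mul_comm, ← lt_div_iff₀ hR]; exact hm
        nlinarith
      have hk := Nat.find_spec hq
      refine Set.mem_iUnion.2 ⟨Nat.find hq, ?_, fun hmem => absurd (mem_ball.1 hmem) (not_lt.2 ?_)⟩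
      · cases' h : Nat.find hq with j
        · rw [mem_ball]; simpa using hdR
        · have hj : j < Nat.find hq := by omega
          have := Nat.find_min hq hj
          rw [mem_ball]; push_neg at this; exact this
      · exact hk
  have hstep : ∀ k : ℕ, ∫⁻ x in A k, edist x y ^ (α - n) ∂volume ≤
      ENNReal.ofReal ((R * 2⁻¹ ^ (k+1)) ^ (α - n) * (R * 2⁻¹ ^ k) ^ (n:ℕ)) * v := by
    intro k
    have hAm : MeasurableSet (A k) := measurableSet_ball.diff measurableSet_ball
    have h1 : ∫⁻ x in A k, edist x y ^ (α - n) ∂volume ≤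
        ∫⁻ _ in A k, ENNReal.ofReal ((R * 2⁻¹ ^ (k+1)) ^ (α - n)) ∂volume := by
      refine setLIntegral_mono' hAm fun x hx => ?_
      have hge : ENNReal.ofReal (R * 2⁻¹ ^ (k+1)) ≤ edist x y := by
        rw [edist_dist]
        exact ENNReal.ofReal_le_ofReal (not_lt.1 fun h => hx.2 (mem_ball.2 h))
      calc edist x y ^ (α - n) ≤ (ENNReal.ofReal (R * 2⁻¹ ^ (k+1))) ^ (α - n) :=
            erpow_anti hge (by have := hαn; linarith)
        _ = ENNReal.ofReal ((R * 2⁻¹ ^ (k+1)) ^ (α - n)) :=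
            ENNReal.ofReal_rpow_of_pos (hrk (k+1))
    rw [setLIntegral_const] at h1
    refine h1.trans ?_
    have h2 : volume (A k) ≤ ENNReal.ofReal ((R * 2⁻¹ ^ k) ^ (n:ℕ)) * v := by
      refine (measure_mono Set.diff_subset).trans ?_
      rw [Measure.addHaar_ball_of_pos _ y (hrk k), finrank_euclideanSpace_fin]
    calc ENNReal.ofReal ((R * 2⁻¹ ^ (k+1)) ^ (α - n)) * volume (A k)
        ≤ ENNReal.ofReal ((R * 2⁻¹ ^ (k+1)) ^ (α - n)) *
            (ENNReal.ofReal ((R * 2⁻¹ ^ k) ^ (n:ℕ)) * v) := mul_le_mul_right h2 _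
      _ = ENNReal.ofReal ((R * 2⁻¹ ^ (k+1)) ^ (α - n) * (R * 2⁻¹ ^ k) ^ (n:ℕ)) * v := by
          rw [ENNReal.ofReal_mul (Real.rpow_nonneg (hrk (k+1)).le _), mul_assoc]
  have hq1 : (2:ℝ) ^ (-α) < 1 := Real.rpow_lt_one_of_one_lt_of_neg one_lt_two (by linarith)
  have hq0 : (0:ℝ) ≤ (2:ℝ) ^ (-α) := Real.rpow_nonneg (by norm_num) _
  calc ∫⁻ x in ball y R, edist x y ^ (α - n) ∂volume
      ≤ ∫⁻ x in {y} ∪ ⋃ k, A k, edist x y ^ (α - n) ∂volume := lintegral_mono_set hcover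
    _ ≤ (∫⁻ x in ({y} : Set (EuclideanSpace ℝ (Fin n))), edist x y ^ (α - n) ∂volume) +
          ∫⁻ x in ⋃ k, A k, edist x y ^ (α - n) ∂volume := lintegral_union_le _ _ _
    _ ≤ 0 + ∑' k, ∫⁻ x in A k, edist x y ^ (α - n) ∂volume := by
        gcongr
        · exact le_of_eq (setLIntegral_measure_zero _ _ (measure_singleton y))
        · exact lintegral_iUnion_le _ _
    _ ≤ ∑' k, ENNReal.ofReal ((R * 2⁻¹ ^ (k+1)) ^ (α - n) * (R * 2⁻¹ ^ k) ^ (n:ℕ)) * v := by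
        rw [zero_add]; exact ENNReal.tsum_le_tsum hstep
    _ = ∑' k, ENNReal.ofReal (R ^ α * 2 ^ ((n:ℝ) - α)) * ENNReal.ofReal ((2:ℝ) ^ (-α)) ^ k * v := by
        refine tsum_congr fun k => ?_
        rw [akey n α R hR k, ENNReal.ofReal_mul (by positivity), ENNReal.ofReal_pow hq0]
    _ = ENNReal.ofReal (R ^ α * 2 ^ ((n:ℝ) - α)) * (1 - ENNReal.ofReal ((2:ℝ) ^ (-α)))⁻¹ * v := by
        rw [ENNReal.tsum_mul_right, ENNReal.tsum_mul_left, ENNReal.tsum_geometric]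
    _ = ENNReal.ofReal (R ^ α * 2 ^ ((n:ℝ) - α) * (1 - 2 ^ (-α))⁻¹) * v := by
        rw [show (1 : ℝ≥0∞) - ENNReal.ofReal ((2:ℝ) ^ (-α)) = ENNReal.ofReal (1 - (2:ℝ) ^ (-α)) by
              rw [ENNReal.ofReal_sub _ hq0, ENNReal.ofReal_one],
            ← ENNReal.ofReal_inv_of_pos (by linarith), ← ENNReal.ofReal_mul (by positivity)]

lemma fracMax_le (n : ℕ) (hn : 1 ≤ n) (α : ℝ) (hα0 : 0 < α) (hαn : α < n)
    (g : EuclideanSpace ℝ (Fin n) → ℝ≥0∞) (x : EuclideanSpace ℝ (Fin n)) :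
    fracMax α g x ≤ (volume (ball (0 : EuclideanSpace ℝ (Fin n)) 1))⁻¹ *
      ∫⁻ y, edist x y ^ (α - n) * g y ∂volume := by
  refine iSup₂_le fun ρ hρ => ?_
  set v : ℝ≥0∞ := volume (ball (0 : EuclideanSpace ℝ (Fin n)) 1) with hv
  set S := ∫⁻ y in ball x ρ, g y ∂volume with hS
  have hvol : volume (ball x ρ) = ENNReal.ofReal (ρ ^ (n:ℕ)) * v := by
    rw [Measure.addHaar_ball_of_pos _ x hρ, finrank_euclideanSpace_fin]
  have hne0 : ENNReal.ofReal (ρ ^ (n:ℕ)) ≠ 0 := (ENNReal.ofReal_pos.2 (pow_pos hρ n)).ne'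
  have hcomb : ENNReal.ofReal (ρ ^ α) * (ENNReal.ofReal (ρ ^ (n:ℕ)))⁻¹ =
      ENNReal.ofReal (ρ ^ (α - (n:ℝ))) := by
    rw [← ENNReal.ofReal_inv_of_pos (pow_pos hρ n), ← ENNReal.ofReal_mul (by positivity)]
    congr 1
    rw [← Real.rpow_natCast ρ n, ← Real.rpow_neg hρ.le, ← Real.rpow_add hρ, ← sub_eq_add_neg]
  have key : ENNReal.ofReal (ρ ^ (α - (n:ℝ))) * S ≤ ∫⁻ y, edist x y ^ (α - n) * g y ∂volume := by
    calc ENNReal.ofReal (ρ ^ (α - (n:ℝ))) * S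
        = ∫⁻ y in ball x ρ, ENNReal.ofReal (ρ ^ (α - (n:ℝ))) * g y ∂volume :=
          (lintegral_const_mul' _ _ ENNReal.ofReal_ne_top).symm
      _ ≤ ∫⁻ y in ball x ρ, edist x y ^ (α - (n:ℝ)) * g y ∂volume := by
          refine setLIntegral_mono' measurableSet_ball fun y hy => ?_
          refine mul_le_mul_left ?_ _
          have h1 : edist x y ≤ ENNReal.ofReal ρ := by
            rw [edist_comm, edist_dist]
            exact ENNReal.ofReal_le_ofReal (mem_ball.1 hy).le
          calc ENNReal.ofReal (ρ ^ (α - (n:ℝ))) = (ENNReal.ofReal ρ) ^ (α - (n:ℝ)) :=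
                (ENNReal.ofReal_rpow_of_pos hρ).symm
            _ ≤ edist x y ^ (α - (n:ℝ)) := erpow_anti h1 (by linarith)
      _ ≤ ∫⁻ y, edist x y ^ (α - (n:ℝ)) * g y ∂volume := setLIntegral_le_lintegral _ _
  calc ENNReal.ofReal (ρ ^ α) * ⨍⁻ y in ball x ρ, g y ∂volume
      = ENNReal.ofReal (ρ ^ α) * (S / (ENNReal.ofReal (ρ ^ (n:ℕ)) * v)) := by
        rw [setLAverage_eq, hvol]
    _ = (ENNReal.ofReal (ρ ^ α) * (ENNReal.ofReal (ρ ^ (n:ℕ)))⁻¹) * S * v⁻¹ := by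
        rw [div_eq_mul_inv, ENNReal.mul_inv (Or.inl hne0) (Or.inl ENNReal.ofReal_ne_top)]
        ring
    _ = ENNReal.ofReal (ρ ^ (α - (n:ℝ))) * S * v⁻¹ := by rw [hcomb]
    _ ≤ (∫⁻ y, edist x y ^ (α - (n:ℝ)) * g y ∂volume) * v⁻¹ := mul_le_mul_left key _
    _ = v⁻¹ * ∫⁻ y, edist x y ^ (α - (n:ℝ)) * g y ∂volume := mul_comm _ _

/-- for a bounded measurable `Ω` of diameter `T₀ > 0` and any nonnegative
integrable `f` vanishing outside `Ω`, `∫_Ω M_α f ≤ C T₀^α ∫_Ω f` with `C = C(n, α)`. -/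
theorem stmt10 (n : ℕ) (hn : 1 ≤ n) (α : ℝ) (hα0 : 0 < α) (hαn : α < n) :
    ∃ C : ℝ, 0 < C ∧
      ∀ (Ω : Set (EuclideanSpace ℝ (Fin n))), MeasurableSet Ω → Bornology.IsBounded Ω →
        ∀ T₀ : ℝ, 0 < T₀ → Metric.diam Ω = T₀ →
          ∀ f : EuclideanSpace ℝ (Fin n) → ℝ, Integrable f volume →
            (∀ y, 0 ≤ f y) → (∀ y ∉ Ω, f y = 0) →
            ∫⁻ y in Ω, fracMax α (fun z => ENNReal.ofReal (f z)) y ∂volume ≤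
              ENNReal.ofReal (C * T₀ ^ α) * ∫⁻ y in Ω, ENNReal.ofReal (f y) ∂volume := by
  have hq1 : (2:ℝ) ^ (-α) < 1 := Real.rpow_lt_one_of_one_lt_of_neg one_lt_two (by linarith)
  have hq0 : (0:ℝ) ≤ (2:ℝ) ^ (-α) := Real.rpow_nonneg (by norm_num) _
  have hC : (0:ℝ) < 2 ^ α * (2 ^ ((n:ℝ) - α) * (1 - 2 ^ (-α))⁻¹) :=
    mul_pos (Real.rpow_pos_of_pos two_pos _)
      (mul_pos (Real.rpow_pos_of_pos two_pos _) (inv_pos.2 (by linarith)))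
  refine ⟨2 ^ α * (2 ^ ((n:ℝ) - α) * (1 - 2 ^ (-α))⁻¹), hC, ?_⟩
  intro Ω hΩ hbdd T₀ hT₀ hdiam f hf hf0 hfΩ
  set v : ℝ≥0∞ := volume (ball (0 : EuclideanSpace ℝ (Fin n)) 1) with hv
  have hv0 : v ≠ 0 := (measure_ball_pos _ _ one_pos).ne'
  have hvtop : v ≠ ∞ := measure_ball_lt_top.ne
  -- measurable version of f
  set f' : EuclideanSpace ℝ (Fin n) → ℝ := hf.1.aemeasurable.mk f with hf'
  have hf'meas : Measurable f' := hf.1.aemeasurable.measurable_mk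
  have hae : f =ᵐ[volume] f' := hf.1.aemeasurable.ae_eq_mk
  set g : EuclideanSpace ℝ (Fin n) → ℝ≥0∞ := fun z => ENNReal.ofReal (f' z) with hg
  have hgmeas : Measurable g := ENNReal.measurable_ofReal.comp hf'meas
  have hgae : (fun z => ENNReal.ofReal (f z)) =ᵐ[volume] g := hae.mono fun z hz => by
    simp [hg, hz]
  set K : EuclideanSpace ℝ (Fin n) → EuclideanSpace ℝ (Fin n) → ℝ≥0∞ :=
    fun x y => edist x y ^ (α - n) with hK
  have hKmeas : Measurable fun p : EuclideanSpace ℝ (Fin n) × EuclideanSpace ℝ (Fin n) =>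
      K p.1 p.2 := (ENNReal.continuous_rpow_const.comp continuous_edist).measurable
  -- replace f by its measurable version in both integrals
  have hL : ∫⁻ y in Ω, fracMax α (fun z => ENNReal.ofReal (f z)) y ∂volume =
      ∫⁻ y in Ω, fracMax α g y ∂volume := by
    refine lintegral_congr fun x => ?_
    unfold fracMax
    refine iSup_congr fun ρ => iSup_congr fun hρ => ?_
    congr 1
    exact setLAverage_congr_fun_ae measurableSet_ball (hgae.mono fun y hy _ => hy)
  have hR : ∫⁻ y in Ω, ENNReal.ofReal (f y) ∂volume = ∫⁻ y in Ω, g y ∂volume :=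
    lintegral_congr_ae (ae_restrict_of_ae hgae)
  rw [hL, hR]
  -- support of g
  have hsupp : ∀ x, (∫⁻ y, K x y * g y ∂volume) = ∫⁻ y in Ω, K x y * g y ∂volume := by
    intro x
    rw [← lintegral_indicator hΩ]
    refine lintegral_congr_ae (hae.mono fun y hy => ?_)
    by_cases hyΩ : y ∈ Ω
    · rw [Set.indicator_of_mem hyΩ]
    · rw [Set.indicator_of_notMem hyΩ, hg]
      simp [← hy, hfΩ y hyΩ]
  set D : ℝ≥0∞ :=
    ENNReal.ofReal ((2 * T₀) ^ α * 2 ^ ((n:ℝ) - α) * (1 - 2 ^ (-α))⁻¹) * v with hD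
  have hDtop : D ≠ ∞ := ENNReal.mul_ne_top ENNReal.ofReal_ne_top hvtop
  calc ∫⁻ y in Ω, fracMax α g y ∂volume
      ≤ ∫⁻ x in Ω, v⁻¹ * ∫⁻ y in Ω, K x y * g y ∂volume ∂volume := by
        refine lintegral_mono fun x => ?_
        rw [← hsupp x]
        exact fracMax_le n hn α hα0 hαn g x
    _ = v⁻¹ * ∫⁻ x in Ω, ∫⁻ y in Ω, K x y * g y ∂volume ∂volume :=
        lintegral_const_mul' _ _ (ENNReal.inv_ne_top.2 hv0)
    _ = v⁻¹ * ∫⁻ y in Ω, ∫⁻ x in Ω, K x y * g y ∂volume ∂volume := by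
        rw [lintegral_lintegral_swap
          ((hKmeas.mul (hgmeas.comp measurable_snd)).aemeasurable)]
    _ ≤ v⁻¹ * ∫⁻ y in Ω, D * g y ∂volume := by
        refine mul_le_mul_right (setLIntegral_mono' hΩ fun y hy => ?_) _
        have h1 : (∫⁻ x in Ω, K x y * g y ∂volume) = (∫⁻ x in Ω, K x y ∂volume) * g y :=
          lintegral_mul_const' _ _ ENNReal.ofReal_ne_top
        rw [h1]
        refine mul_le_mul_left ?_ _
        have hsub : Ω ⊆ ball y (2 * T₀) := fun z hz => by
          rw [mem_ball]
          calc dist z y ≤ Metric.diam Ω := dist_le_diam_of_mem hbdd hz hy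
            _ = T₀ := hdiam
            _ < 2 * T₀ := by linarith
        calc ∫⁻ x in Ω, K x y ∂volume ≤ ∫⁻ x in ball y (2 * T₀), K x y ∂volume :=
              lintegral_mono_set hsub
          _ ≤ D := annuli n hn α hα0 hαn y (2 * T₀) (by linarith)
    _ = v⁻¹ * (D * ∫⁻ y in Ω, g y ∂volume) := by
        rw [lintegral_const_mul' _ _ hDtop]
    _ = ENNReal.ofReal ((2 * T₀) ^ α * 2 ^ ((n:ℝ) - α) * (1 - 2 ^ (-α))⁻¹) * (v⁻¹ * v) *
          ∫⁻ y in Ω, g y ∂volume := by rw [hD]; ring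
    _ = ENNReal.ofReal (2 ^ α * (2 ^ ((n:ℝ) - α) * (1 - 2 ^ (-α))⁻¹) * T₀ ^ α) *
          ∫⁻ y in Ω, g y ∂volume := by
        rw [ENNReal.inv_mul_cancel hv0 hvtop, mul_one]
        congr 2
        rw [Real.mul_rpow (by norm_num) hT₀.le]
        ring
end

section
/- Let n ≥ 1, let g : ℝⁿ → [0, ∞) be locally integrable, let x ∈ ℝⁿ, r > 0, and let y, z ∈ B_r(x). Then M g(y) ≤ max{ M(χ_{B_{2r}(x)} g)(y), 3ⁿ · M g(z) }. -/
open MeasureTheory Metric ENNReal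

/-- for nonnegative locally integrable `g` and `y, z ∈ B_r(x)`,
`M g(y) ≤ max( M(χ_{B_{2r}(x)} g)(y), 3ⁿ M g(z) )`. -/
theorem stmt11 (n : ℕ) (hn : 1 ≤ n)
    (g : EuclideanSpace ℝ (Fin n) → ℝ) (hg : LocallyIntegrable g volume)
    (hg0 : ∀ t, 0 ≤ g t)
    (x : EuclideanSpace ℝ (Fin n)) (r : ℝ) (hr : 0 < r)
    (y z : EuclideanSpace ℝ (Fin n)) (hy : y ∈ ball x r) (hz : z ∈ ball x r) :
    fracMax 0 (fun t => ENNReal.ofReal (g t)) y ≤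
      max (fracMax 0 ((ball x (2 * r)).indicator fun t => ENNReal.ofReal (g t)) y)
        ((3 : ℝ≥0∞) ^ n * fracMax 0 (fun t => ENNReal.ofReal (g t)) z) := by
  unfold fracMax
  refine iSup₂_le fun ρ hρ => ?_
  simp only [Real.rpow_zero, ENNReal.ofReal_one, one_mul]
  rcases le_or_gt ρ r with hρr | hρr
  · -- small radius: use the indicator term
    refine le_max_of_le_left ?_
    have hsub : ball y ρ ⊆ ball x (2 * r) := by
      intro t ht
      simp only [mem_ball] at *
      calc dist t x ≤ dist t y + dist y x := dist_triangle t y x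
        _ < ρ + r := add_lt_add ht hy
        _ ≤ 2 * r := by linarith
    have heq : ⨍⁻ t in ball y ρ, ENNReal.ofReal (g t) ∂volume
        = ⨍⁻ t in ball y ρ, (ball x (2 * r)).indicator
            (fun t => ENNReal.ofReal (g t)) t ∂volume := by
      rw [setLAverage_eq, setLAverage_eq]
      congr 1
      refine setLIntegral_congr_fun_ae measurableSet_ball (ae_of_all _ fun t ht => ?_)
      rw [Set.indicator_of_mem (hsub ht)]
    rw [heq]
    have hle := le_iSup₂ (f := fun ρ (_ : 0 < ρ) => ENNReal.ofReal (ρ ^ (0:ℝ)) *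
      ⨍⁻ t in ball y ρ, (ball x (2 * r)).indicator (fun t => ENNReal.ofReal (g t)) t ∂volume)
      ρ hρ
    simpa using hle
  · -- large radius: compare with ball z (3ρ)
    refine le_max_of_le_right ?_
    have hsub : ball y ρ ⊆ ball z (3 * ρ) := by
      intro t ht
      simp only [mem_ball] at *
      have : dist y z < 2 * r := by
        calc dist y z ≤ dist y x + dist x z := dist_triangle y x z
          _ < r + r := add_lt_add hy (by rwa [dist_comm])
          _ = 2 * r := by ring
      calc dist t z ≤ dist t y + dist y z := dist_triangle t y z
        _ < ρ + 2 * r := add_lt_add ht this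
        _ ≤ 3 * ρ := by linarith
    have hvol : volume (ball z (3 * ρ)) = ENNReal.ofReal (3 ^ n) * volume (ball y ρ) := by
      rw [Measure.addHaar_ball_mul_of_pos volume z (by norm_num : (0:ℝ) < 3) ρ,
        Measure.addHaar_ball_center volume y ρ]
      congr 2
      simp
    have h3 : ENNReal.ofReal ((3:ℝ) ^ n) = (3 : ℝ≥0∞) ^ n := by
      rw [ENNReal.ofReal_pow (by norm_num)]
      norm_num
    have hρ0 : 0 < ρ := lt_trans hr hρr
    have hV1 : volume (ball y ρ) ≠ 0 := (measure_ball_pos volume y hρ0).ne'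
    have hV1' : volume (ball y ρ) ≠ ⊤ := measure_ball_lt_top.ne
    have key : ⨍⁻ t in ball y ρ, ENNReal.ofReal (g t) ∂volume
        ≤ (3 : ℝ≥0∞) ^ n * ⨍⁻ t in ball z (3 * ρ), ENNReal.ofReal (g t) ∂volume := by
      rw [setLAverage_eq, setLAverage_eq, hvol, h3, ← mul_div_assoc,
        ENNReal.mul_div_mul_left _ _ (by norm_num) (by norm_num)]
      exact ENNReal.div_le_div_right (lintegral_mono_set hsub) _
    refine key.trans (mul_le_mul_right ?_ _)
    have hle := le_iSup₂ (f := fun ρ (_ : 0 < ρ) => ENNReal.ofReal (ρ ^ (0:ℝ)) *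
      ⨍⁻ t in ball z ρ, ENNReal.ofReal (g t) ∂volume)
      (3 * ρ) (by linarith : (0:ℝ) < 3 * ρ)
    simpa using hle
end

section
/- Let n ≥ 1, 0 < ε < 1, R ≥ R₁ > 0, x₀ ∈ ℝⁿ, and set Q = B_R(x₀). Let V ⊂ W ⊂ Q be Lebesgue measurable sets satisfying: (i) Lⁿ(V) < ε · Lⁿ(B_{R₁}(0)); and (ii) for all x ∈ Q and all r ∈ (0, R₁], if Lⁿ(V ∩ B_r(x)) ≥ ε · Lⁿ(B_r(x)) then B_r(x) ∩ Q ⊂ W. Then there exists a constant C depending only on n such that Lⁿ(V) ≤ C · ε · Lⁿ(W). -/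
open MeasureTheory Metric ENNReal


lemma geom_ball (n : ℕ) (hn : 1 ≤ n) (x₀ x : EuclideanSpace ℝ (Fin n)) (R r : ℝ)
    (hx : x ∈ ball x₀ R) (hr : 0 < r) (hrR : r ≤ R) :
    volume (ball x r) ≤ ENNReal.ofReal ((4:ℝ)^n) * volume (ball x r ∩ ball x₀ R) := by
  have hfr : Module.finrank ℝ (EuclideanSpace ℝ (Fin n)) = n := finrank_euclideanSpace_fin
  obtain ⟨y, hy⟩ : ∃ y : EuclideanSpace ℝ (Fin n), ball y (r/4) ⊆ ball x r ∩ ball x₀ R := by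
    set d := dist x x₀ with hd
    have hdR : d < R := mem_ball.1 hx
    by_cases hcase : d ≤ r/2
    · refine ⟨x₀, fun z hz => ?_⟩
      have hz' : dist z x₀ < r/4 := mem_ball.1 hz
      constructor
      · have := dist_triangle z x₀ x
        rw [dist_comm x₀ x] at this
        exact mem_ball.2 (by rw [hd] at hcase; linarith)
      · exact mem_ball.2 (by linarith)
    · push_neg at hcase
      have hdpos : 0 < d := lt_trans (by linarith) hcase
      set c := r / (2*d) with hc
      have hc0 : 0 < c := by positivity
      have hc1 : c < 1 := by rw [hc]; rw [div_lt_one (by linarith)]; linarith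
      refine ⟨x + c • (x₀ - x), fun z hz => ?_⟩
      have hz' : dist z (x + c • (x₀ - x)) < r/4 := mem_ball.1 hz
      have hyx : dist (x + c • (x₀ - x)) x = r/2 := by
        rw [dist_eq_norm, add_sub_cancel_left, norm_smul, Real.norm_of_nonneg hc0.le,
          ← dist_eq_norm, dist_comm]
        rw [hc, ← hd]
        field_simp
      have hyx₀ : dist (x + c • (x₀ - x)) x₀ = d - r/2 := by
        have : x + c • (x₀ - x) - x₀ = (1 - c) • (x - x₀) := by
          module
        rw [dist_eq_norm, this, norm_smul, Real.norm_of_nonneg (by linarith),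
          ← dist_eq_norm, ← hd]
        have : c * d = r / 2 := by rw [hc]; field_simp
        nlinarith
      constructor
      · have := dist_triangle z (x + c • (x₀ - x)) x
        exact mem_ball.2 (by linarith)
      · have := dist_triangle z (x + c • (x₀ - x)) x₀
        exact mem_ball.2 (by linarith)
  haveI : Nontrivial (EuclideanSpace ℝ (Fin n)) :=
    Module.nontrivial_of_finrank_pos (R := ℝ) (by simp [hfr]; omega)
  have h1 : volume (ball y (r/4)) ≤ volume (ball x r ∩ ball x₀ R) := measure_mono hy
  have h2 : volume (ball x r) = ENNReal.ofReal ((4:ℝ)^n) * volume (ball y (r/4)) := by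
    rw [Measure.addHaar_ball volume y (by positivity : (0:ℝ) ≤ r/4),
      Measure.addHaar_ball volume x hr.le, hfr, ← mul_assoc,
      ← ENNReal.ofReal_mul (by positivity)]
    congr 2
    rw [div_pow, ← mul_div_assoc, mul_div_assoc, mul_comm]
    field_simp
  rw [h2]
  exact mul_le_mul_right h1 _

lemma stopping (n : ℕ) (ε R₁ : ℝ) (V : Set (EuclideanSpace ℝ (Fin n)))
    (x : EuclideanSpace ℝ (Fin n))
    (hne : ∃ r, 0 < r ∧ r ≤ R₁ ∧
      ENNReal.ofReal ε * volume (ball x r) ≤ volume (V ∩ ball x r)) :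
    ∃ ρ, 0 < ρ ∧ ρ ≤ R₁ ∧
      ENNReal.ofReal ε * volume (ball x ρ) ≤ volume (V ∩ ball x ρ) ∧
      ∀ s, ρ < s → s ≤ R₁ →
        volume (V ∩ ball x s) < ENNReal.ofReal ε * volume (ball x s) := by
  set S : Set ℝ := {r | 0 < r ∧ r ≤ R₁ ∧
    ENNReal.ofReal ε * volume (ball x r) ≤ volume (V ∩ ball x r)} with hS
  obtain ⟨r₀, hr₀⟩ := hne
  have hSne : S.Nonempty := ⟨r₀, hr₀⟩
  have hSbdd : BddAbove S := ⟨R₁, fun r hr => hr.2.1⟩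
  set ρ := sSup S with hρ
  have hρpos : 0 < ρ := lt_of_lt_of_le hr₀.1 (le_csSup hSbdd hr₀)
  have hρle : ρ ≤ R₁ := csSup_le hSne fun r hr => hr.2.1
  have hseq : ∀ k : ℕ, ∃ r ∈ S, ρ - 1/(k+1) < r := fun k =>
    exists_lt_of_lt_csSup hSne (by
      have : (0:ℝ) < 1/(k+1) := by positivity
      linarith)
  choose u huS hugt using hseq
  have huρ : ∀ k, u k ≤ ρ := fun k => le_csSup hSbdd (huS k)
  have hball : ball x ρ = ⋃ k : ℕ, ball x (u k) := by
    ext z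
    simp only [Set.mem_iUnion, mem_ball]
    constructor
    · intro hz
      obtain ⟨k, hk⟩ := exists_nat_one_div_lt (show (0:ℝ) < ρ - dist z x by linarith)
      exact ⟨k, by have := hugt k; linarith⟩
    · rintro ⟨k, hk⟩
      exact lt_of_lt_of_le hk (huρ k)
  have hdir : Directed (· ⊆ ·) (fun k : ℕ => ball x (u k)) := by
    intro a b
    rcases le_total (u a) (u b) with h | h
    · exact ⟨b, ball_subset_ball h, subset_rfl⟩
    · exact ⟨a, subset_rfl, ball_subset_ball h⟩
  have hvol : volume (ball x ρ) = ⨆ k : ℕ, volume (ball x (u k)) := by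
    rw [hball, hdir.measure_iUnion]
  refine ⟨ρ, hρpos, hρle, ?_, ?_⟩
  · rw [hvol, ENNReal.mul_iSup]
    refine iSup_le fun k => ?_
    calc ENNReal.ofReal ε * volume (ball x (u k)) ≤ volume (V ∩ ball x (u k)) :=
          (huS k).2.2
      _ ≤ volume (V ∩ ball x ρ) :=
          measure_mono (Set.inter_subset_inter_right _ (ball_subset_ball (huρ k)))
  · intro s hs hsR
    by_contra h
    push_neg at h
    have : s ∈ S := ⟨lt_trans hρpos hs, hsR, h⟩
    exact absurd (le_csSup hSbdd this) (not_le.2 hs)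

lemma inter_closedBall_le (n : ℕ) (hn : 1 ≤ n) (V : Set (EuclideanSpace ℝ (Fin n)))
    (x : EuclideanSpace ℝ (Fin n)) (r : ℝ) :
    volume (V ∩ closedBall x r) ≤ volume (V ∩ ball x r) := by
  haveI : Nontrivial (EuclideanSpace ℝ (Fin n)) :=
    Module.nontrivial_of_finrank_pos (R := ℝ) (by simp [finrank_euclideanSpace_fin]; omega)
  have h1 : V ∩ closedBall x r ⊆ (V ∩ ball x r) ∪ sphere x r := by
    rw [← ball_union_sphere]
    rintro z ⟨hz1, hz2 | hz2⟩
    · exact Or.inl ⟨hz1, hz2⟩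
    · exact Or.inr hz2
  calc volume (V ∩ closedBall x r) ≤ volume (V ∩ ball x r) + volume (sphere x r) :=
        le_trans (measure_mono h1) (measure_union_le _ _)
    _ = volume (V ∩ ball x r) := by rw [Measure.addHaar_sphere volume, add_zero]


/-- the good-λ covering lemma. If `V ⊆ W ⊆ Q = B_R(x₀)` are measurable,
`Lⁿ(V) < ε Lⁿ(B_{R₁}(0))`, and for all `x ∈ Q`, `r ∈ (0, R₁]`, the density condition
`Lⁿ(V ∩ B_r(x)) ≥ ε Lⁿ(B_r(x))` implies `B_r(x) ∩ Q ⊆ W`, then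
`Lⁿ(V) ≤ C ε Lⁿ(W)` with `C = C(n)`. -/
theorem stmt12 (n : ℕ) (hn : 1 ≤ n) :
    ∃ C : ℝ, 0 < C ∧
      ∀ (ε R R₁ : ℝ) (x₀ : EuclideanSpace ℝ (Fin n))
        (V W : Set (EuclideanSpace ℝ (Fin n))),
        0 < ε → ε < 1 → 0 < R₁ → R₁ ≤ R →
        MeasurableSet V → MeasurableSet W →
        V ⊆ W → W ⊆ ball x₀ R →
        volume V < ENNReal.ofReal ε * volume (ball (0 : EuclideanSpace ℝ (Fin n)) R₁) →
        (∀ x ∈ ball x₀ R, ∀ r : ℝ, 0 < r → r ≤ R₁ →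
          ENNReal.ofReal ε * volume (ball x r) ≤ volume (V ∩ ball x r) →
          ball x r ∩ ball x₀ R ⊆ W) →
        volume V ≤ ENNReal.ofReal (C * ε) * volume W := by
  refine ⟨(20:ℝ)^n, by positivity, ?_⟩
  intro ε R R₁ x₀ V W hε hε1 hR₁ hR₁R hV hW hVW hWQ hsmall hyp
  have hfr : Module.finrank ℝ (EuclideanSpace ℝ (Fin n)) = n := finrank_euclideanSpace_fin
  haveI ntv : Nontrivial (EuclideanSpace ℝ (Fin n)) :=
    Module.nontrivial_of_finrank_pos (R := ℝ) (by simp [hfr]; omega)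
  have hVQ : V ⊆ ball x₀ R := hVW.trans hWQ
  set Q := ball x₀ R with hQdef
  -- the set of "good" points of V: density ≥ ε at some scale ≤ R₁
  set G : Set (EuclideanSpace ℝ (Fin n)) := {x | x ∈ V ∧ ∃ r : ℝ, 0 < r ∧ r ≤ R₁ ∧
    ENNReal.ofReal ε * volume (ball x r) ≤ volume (V ∩ ball x r)} with hG
  have hGV : G ⊆ V := fun x hx => hx.1
  -- almost every point of V is good (Lebesgue density theorem)
  have hnull : volume (V \ G) = 0 := by
    have hae := Besicovitch.ae_tendsto_measure_inter_div_of_measurableSet (volume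
      (α := EuclideanSpace ℝ (Fin n))) hV
    rw [MeasureTheory.ae_iff] at hae
    refine measure_mono_null ?_ hae
    intro x hx
    simp only [Set.mem_setOf_eq]
    intro htend
    apply hx.2
    rw [Set.indicator_of_mem hx.1] at htend
    have hev1 : ∀ᶠ r in nhdsWithin (0:ℝ) (Set.Ioi 0),
        ENNReal.ofReal ε < volume (V ∩ closedBall x r) / volume (closedBall x r) :=
      htend.eventually (eventually_gt_nhds (by
        simpa using ENNReal.ofReal_lt_one.2 hε1))
    have hev2 : ∀ᶠ r in nhdsWithin (0:ℝ) (Set.Ioi 0), r ∈ Set.Ioc (0:ℝ) R₁ :=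
      Ioc_mem_nhdsGT_of_mem ⟨le_rfl, hR₁⟩
    obtain ⟨r, hr1, hr2⟩ := (hev1.and hev2).exists
    have hlt : ENNReal.ofReal ε * volume (closedBall x r) < volume (V ∩ closedBall x r) :=
      ENNReal.mul_lt_of_lt_div hr1
    have heq : volume (closedBall x r) = volume (ball x r) :=
      Measure.addHaar_closedBall_eq_addHaar_ball volume x r
    exact ⟨hx.1, r, hr2.1, hr2.2, by
      rw [← heq]
      exact le_trans hlt.le (inter_closedBall_le n hn V x r)⟩
  -- choose stopping radii
  have key : ∀ x ∈ G, ∃ ρ, 0 < ρ ∧ ρ ≤ R₁ ∧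
      ENNReal.ofReal ε * volume (ball x ρ) ≤ volume (V ∩ ball x ρ) ∧
      ∀ s, ρ < s → s ≤ R₁ →
        volume (V ∩ ball x s) < ENNReal.ofReal ε * volume (ball x s) :=
    fun x hx => stopping n ε R₁ V x hx.2
  choose! ρ hρ1 hρ2 hρ3 hρ4 using key
  -- Vitali covering
  obtain ⟨u, huG, hdisj, hcover⟩ :=
    Vitali.exists_disjoint_subfamily_covering_enlargement_closedBall G id ρ R₁
      (fun a ha => hρ2 a ha) 5 (by norm_num)
  simp only [id] at hdisj hcover
  have hcnt : u.Countable := hdisj.countable_of_nonempty_interior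
    (fun b hb => ⟨b, ball_subset_interior_closedBall (mem_ball_self (hρ1 b (huG hb)))⟩)
  have hbQ : ∀ b ∈ u, b ∈ Q := fun b hb => hVQ (hGV (huG hb))
  have hDW : ∀ b ∈ u, ball b (ρ b) ∩ Q ⊆ W := fun b hb =>
    hyp b (hbQ b hb) (ρ b) (hρ1 b (huG hb)) (hρ2 b (huG hb)) (hρ3 b (huG hb))
  -- coverage of G by enlarged balls
  have hGcov : G ⊆ ⋃ b ∈ u, (V ∩ closedBall b (5 * ρ b)) := by
    intro a ha
    obtain ⟨b, hb, hsub⟩ := hcover a ha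
    exact Set.mem_biUnion hb ⟨hGV ha, hsub (mem_closedBall_self (hρ1 a ha).le)⟩
  -- sum over the disjoint family is at most the measure of W
  have hdisjD : u.PairwiseDisjoint (fun b => ball b (ρ b) ∩ Q) := by
    intro a ha b hb hab
    exact (hdisj ha hb hab).mono
      (Set.inter_subset_left.trans ball_subset_closedBall)
      (Set.inter_subset_left.trans ball_subset_closedBall)
  have hsum : ∑' b : u, volume (ball (b : EuclideanSpace ℝ (Fin n)) (ρ b) ∩ Q) ≤ volume W := by
    rw [← measure_biUnion hcnt hdisjD
      (fun b _ => (isOpen_ball.inter isOpen_ball).measurableSet)]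
    exact measure_mono (Set.iUnion₂_subset hDW)
  -- per-ball estimate
  have hest : ∀ b ∈ u, volume (V ∩ closedBall b (5 * ρ b)) ≤
      ENNReal.ofReal ((20:ℝ)^n * ε) * volume (ball b (ρ b) ∩ Q) := by
    intro b hb
    have hbG := huG hb
    have hb1 : 0 < ρ b := hρ1 b hbG
    have hb2 : ρ b ≤ R₁ := hρ2 b hbG
    have h5 : volume (V ∩ ball b (5 * ρ b)) ≤
        ENNReal.ofReal ε * volume (ball b (5 * ρ b)) := by
      rcases le_or_gt (5 * ρ b) R₁ with h | h
      · exact (hρ4 b hbG (5 * ρ b) (by linarith) h).le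
      · calc volume (V ∩ ball b (5 * ρ b)) ≤ volume V := measure_mono Set.inter_subset_left
          _ ≤ ENNReal.ofReal ε * volume (ball (0 : EuclideanSpace ℝ (Fin n)) R₁) := hsmall.le
          _ ≤ ENNReal.ofReal ε * volume (ball (0 : EuclideanSpace ℝ (Fin n)) (5 * ρ b)) :=
              mul_le_mul_right (measure_mono (ball_subset_ball h.le)) _
          _ = ENNReal.ofReal ε * volume (ball b (5 * ρ b)) := by
              rw [Measure.addHaar_ball_center volume b (5 * ρ b)]
    have hscale : volume (ball b (5 * ρ b)) =
        ENNReal.ofReal ((5:ℝ)^n) * volume (ball b (ρ b)) := by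
      rw [Measure.addHaar_ball_mul volume b (by norm_num : (0:ℝ) ≤ 5) (ρ b), hfr,
        Measure.addHaar_ball_center volume b (ρ b)]
    have hgeom : volume (ball b (ρ b)) ≤
        ENNReal.ofReal ((4:ℝ)^n) * volume (ball b (ρ b) ∩ Q) :=
      geom_ball n hn x₀ b R (ρ b) (hbQ b hb) hb1 (le_trans hb2 hR₁R)
    calc volume (V ∩ closedBall b (5 * ρ b)) ≤ volume (V ∩ ball b (5 * ρ b)) :=
          inter_closedBall_le n hn V b (5 * ρ b)
      _ ≤ ENNReal.ofReal ε * volume (ball b (5 * ρ b)) := h5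
      _ = ENNReal.ofReal ε * (ENNReal.ofReal ((5:ℝ)^n) * volume (ball b (ρ b))) := by
          rw [hscale]
      _ ≤ ENNReal.ofReal ε * (ENNReal.ofReal ((5:ℝ)^n) *
            (ENNReal.ofReal ((4:ℝ)^n) * volume (ball b (ρ b) ∩ Q))) :=
          mul_le_mul_right (mul_le_mul_right hgeom _) _
      _ = ENNReal.ofReal ((20:ℝ)^n * ε) * volume (ball b (ρ b) ∩ Q) := by
          rw [← mul_assoc, ← mul_assoc, ← ENNReal.ofReal_mul hε.le,
            ← ENNReal.ofReal_mul (by positivity)]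
          congr 2
          rw [mul_assoc, ← mul_pow]
          norm_num [mul_comm]
  -- put everything together
  calc volume V ≤ volume G + volume (V \ G) := by
        refine le_trans (measure_mono ?_) (measure_union_le _ _)
        intro x hx
        by_cases h : x ∈ G
        · exact Or.inl h
        · exact Or.inr ⟨hx, h⟩
    _ = volume G := by rw [hnull, add_zero]
    _ ≤ volume (⋃ b ∈ u, (V ∩ closedBall b (5 * ρ b))) := measure_mono hGcov
    _ ≤ ∑' b : u, volume (V ∩ closedBall (b : EuclideanSpace ℝ (Fin n)) (5 * ρ b)) :=
        measure_biUnion_le volume hcnt _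
    _ ≤ ∑' b : u, ENNReal.ofReal ((20:ℝ)^n * ε) *
          volume (ball (b : EuclideanSpace ℝ (Fin n)) (ρ b) ∩ Q) :=
        ENNReal.tsum_le_tsum (fun b => hest b b.2)
    _ = ENNReal.ofReal ((20:ℝ)^n * ε) *
          ∑' b : u, volume (ball (b : EuclideanSpace ℝ (Fin n)) (ρ b) ∩ Q) :=
        ENNReal.tsum_mul_left
    _ ≤ ENNReal.ofReal ((20:ℝ)^n * ε) * volume W := mul_le_mul_right hsum _
end
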